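/- The symmetric square of the circle, $SP^2(S^1) = (S^1 \times S^1)/\mathbb{Z}/2$ with the transposition involution, is homeomorphic to the compact Möbius band $M$, via a homeomorphism of pairs carrying the image of the diagonal $dS^1$ onto the boundary circle $\partial M$. -/

import Mathlib

open unitInterval Set

noncomputable section

/-- The space of paths in `X`: continuous maps from the unit interval. -/
abbrev PathSp (X : Type*) [TopologicalSpace X] := C(I, X)

/-- Path reversal, the `ℤ/2`-action on the path space. -/
def pathRev {X : Type*} [TopologicalSpace X] (γ : PathSp X) : PathSp X :=
  γ.comp ⟨unitInterval.symm, unitInterval.continuous_symm⟩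

/-- The evaluation map `π : PX → X × X`, `γ ↦ (γ 0, γ 1)`. -/
def evalMap (X : Type*) [TopologicalSpace X] : PathSp X → X × X :=
  fun γ => (γ 0, γ 1)

/-- `σ` is a local section of the evaluation map on `U ⊆ X × X` which is equivariant
with respect to transposition and path reversal. -/
def IsSymSection {X : Type*} [TopologicalSpace X] (U : Set (X × X))
    (sec : C(U, PathSp X)) : Prop :=
  (∀ u : U, sec u 0 = (u : X × X).1 ∧ sec u 1 = (u : X × X).2) ∧
  (∀ (u : U) (hs : Prod.swap (u : X × X) ∈ U) (t : I),
      sec ⟨Prod.swap (u : X × X), hs⟩ t = sec u (unitInterval.symm t))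

/-- `TCΣ(X) ≤ k` : there is a cover of `X × X` by `k+1` invariant open sets,
each admitting an equivariant local section of the evaluation map. -/
def TCSigma_le (X : Type*) [TopologicalSpace X] (k : ℕ) : Prop :=
  ∃ U : Fin (k + 1) → Set (X × X),
    (∀ i, IsOpen (U i)) ∧
    (∀ i, ∀ p ∈ U i, Prod.swap p ∈ U i) ∧
    (⋃ i, U i) = Set.univ ∧
    (∀ i, ∃ sec : C(U i, PathSp X), IsSymSection (U i) sec)

/-- The symmetrized topological complexity, as an extended natural number. -/
def TCSigma (X : Type*) [TopologicalSpace X] : ℕ∞ :=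
  sInf {n : ℕ∞ | ∃ k : ℕ, n = k ∧ TCSigma_le X k}

/-- `TC^{M,Σ}(X) ≤ k`: as for `TCΣ` but each set of the cover contains the diagonal and the
sections are constant on the diagonal. -/
def TCMSigma_le (X : Type*) [TopologicalSpace X] (k : ℕ) : Prop :=
  ∃ U : Fin (k + 1) → Set (X × X),
    (∀ i, IsOpen (U i)) ∧
    (∀ i, ∀ p ∈ U i, Prod.swap p ∈ U i) ∧
    (∀ i (x : X), (x, x) ∈ U i) ∧
    (⋃ i, U i) = Set.univ ∧
    (∀ i, ∃ sec : C(U i, PathSp X), IsSymSection (U i) sec ∧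
      ∀ (x : X) (h : (x, x) ∈ U i) (t : I), sec ⟨(x, x), h⟩ t = x)

/-- The monoidal symmetrized topological complexity, as an extended natural number. -/
def TCMSigma (X : Type*) [TopologicalSpace X] : ℕ∞ :=
  sInf {n : ℕ∞ | ∃ k : ℕ, n = k ∧ TCMSigma_le X k}
/-! ### The symmetric square -/

/-- The symmetric square `SP²(X) = (X × X)/(ℤ/2)`, the orbit space of the transposition. -/
def SP2 (X : Type*) [TopologicalSpace X] : Type _ :=
  Quot (fun a b : X × X => a = b ∨ a = Prod.swap b)

instance SP2.instTop (X : Type*) [TopologicalSpace X] : TopologicalSpace (SP2 X) :=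
  instTopologicalSpaceQuot

/-- The orbit projection `X × X → SP²(X)`. -/
def sp2mk {X : Type*} [TopologicalSpace X] (p : X × X) : SP2 X :=
  Quot.mk _ p

/-- The image `dX ⊆ SP²(X)` of the diagonal. -/
def sp2diag (X : Type*) [TopologicalSpace X] : Set (SP2 X) :=
  Set.range fun x : X => sp2mk (x, x)

/-- The Möbius band, as the quotient of the unit square identifying `(0,t) ~ (1,1-t)`. -/
def Moebius : Type :=
  Quot (fun a b : I × I => a = b ∨
    (a.1 = 0 ∧ b.1 = 1 ∧ b.2 = unitInterval.symm a.2) ∨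
    (a.1 = 1 ∧ b.1 = 0 ∧ b.2 = unitInterval.symm a.2))

instance : TopologicalSpace Moebius := instTopologicalSpaceQuot

/-- The boundary circle of the Möbius band: the image of `I × {0,1}`. -/
def moebiusBoundary : Set Moebius :=
  {x | ∃ p : I × I, (p.2 = 0 ∨ p.2 = 1) ∧ Quot.mk _ p = x}

/-! ### Auxiliary constructions for Morton's theorem -/

namespace MortonAux

/-- `ee x = exp(π x i)`. -/
def ee (x : ℝ) : ℂ := Complex.exp ((Real.pi * x : ℝ) * Complex.I)

lemma ee_mem (x : ℝ) : ee x ∈ Metric.sphere (0:ℂ) 1 := by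
  rw [mem_sphere_zero_iff_norm, ee]
  exact Complex.norm_exp_ofReal_mul_I _

lemma ee_cont : Continuous ee := by
  unfold ee; fun_prop

lemma ee_eq_iff {x y : ℝ} : ee x = ee y ↔ ∃ n : ℤ, x = y + 2 * n := by
  rw [ee, ee, Complex.exp_eq_exp_iff_exists_int]
  have hpi := Real.pi_ne_zero
  constructor
  · rintro ⟨n, hn⟩
    refine ⟨n, ?_⟩
    have h2 : ((Real.pi * x : ℝ) : ℂ) = ((Real.pi * y + n * (2 * Real.pi) : ℝ) : ℂ) := by
      apply mul_right_cancel₀ Complex.I_ne_zero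
      push_cast at hn ⊢
      rw [hn]; ring
    have h3 : (Real.pi * x : ℝ) = Real.pi * y + n * (2 * Real.pi) :=
      Complex.ofReal_injective h2
    have h4 : Real.pi * x = Real.pi * (y + 2 * n) := by rw [h3]; ring
    exact mul_left_cancel₀ hpi h4
  · rintro ⟨n, rfl⟩
    exact ⟨n, by push_cast; ring⟩

lemma ee_add_two (x : ℝ) : ee (x + 2) = ee x := ee_eq_iff.mpr ⟨1, by ring⟩

/-- The circle. -/
abbrev S : Set ℂ := Metric.sphere (0:ℂ) 1

/-- `ee` as a map into the circle. -/
def es (x : ℝ) : S := ⟨ee x, ee_mem x⟩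

lemma es_eq_iff {x y : ℝ} : es x = es y ↔ ∃ n : ℤ, x = y + 2 * n := by
  rw [Subtype.ext_iff]; exact ee_eq_iff

lemma es_cont : Continuous es := ee_cont.subtype_mk _

lemma I_eq_zero {x : I} (h : (x:ℝ) = 0) : x = 0 := Subtype.ext h
lemma I_eq_one {x : I} (h : (x:ℝ) = 1) : x = 1 := Subtype.ext h
lemma I_symm_eq {x y : I} (h : (y:ℝ) = 1 - (x:ℝ)) : y = σ x :=
  Subtype.ext (by rw [h, unitInterval.coe_symm_eq])

lemma es_arg (z : S) : es (Complex.arg z / Real.pi) = z := by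
  have hz : ‖(z : ℂ)‖ = 1 := by
    have := z.2
    rwa [mem_sphere_zero_iff_norm] at this
  have hpi := Real.pi_ne_zero
  apply Subtype.ext
  show Complex.exp ((Real.pi * (Complex.arg z / Real.pi) : ℝ) * Complex.I) = z
  rw [mul_div_cancel₀ _ hpi]
  have := Complex.norm_mul_exp_arg_mul_I (z : ℂ)
  rwa [hz, Complex.ofReal_one, one_mul] at this

lemma arg_div_pi_mem (z : S) : -1 < Complex.arg z / Real.pi ∧ Complex.arg z / Real.pi ≤ 1 := by
  have hpi := Real.pi_pos
  constructor
  · rw [lt_div_iff₀ hpi]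
    simpa using Complex.neg_pi_lt_arg (z : ℂ)
  · rw [div_le_one hpi]
    exact Complex.arg_le_pi _

/-- The basic map `I × I → S × S`. -/
def g (p : I × I) : S × S := (es ((p.1 : ℝ) + (p.2 : ℝ)), es ((p.1 : ℝ) - (p.2 : ℝ)))

lemma g_cont : Continuous g := by
  apply Continuous.prodMk
  · exact es_cont.comp (by fun_prop)
  · exact es_cont.comp (by fun_prop)

lemma sp2mk_swap {X : Type*} [TopologicalSpace X] (p : X × X) :
    sp2mk (Prod.swap p) = sp2mk p := by
  apply Quot.sound
  exact Or.inr rfl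

lemma srel_equiv (X : Type*) :
    Equivalence (fun a b : X × X => a = b ∨ a = Prod.swap b) := by
  constructor
  · intro a; exact Or.inl rfl
  · rintro a b (rfl | rfl)
    · exact Or.inl rfl
    · exact Or.inr (Prod.swap_swap _).symm
  · rintro a b c (rfl | rfl) (rfl | h)
    · exact Or.inl rfl
    · exact Or.inr h
    · exact Or.inr rfl
    · exact Or.inl (by rw [h, Prod.swap_swap])

lemma sp2mk_eq_iff {X : Type*} [TopologicalSpace X] {a b : X × X} :
    sp2mk a = sp2mk b ↔ (a = b ∨ a = Prod.swap b) := by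
  constructor
  · intro h
    exact ((srel_equiv X).eqvGen_iff).mp (Quot.eq.mp h)
  · intro h
    exact Quot.sound h


/-- The descended map `Moebius → SP2 S`. -/
def F : Moebius → SP2 S := Quot.lift (fun p => sp2mk (g p)) (by
  rintro a b (rfl | ⟨h0, h1, hsymm⟩ | ⟨h0, h1, hsymm⟩)
  · rfl
  · -- a.1 = 0, b.1 = 1, b.2 = symm a.2
    have hA : (a.1 : ℝ) = 0 := by rw [h0]; simp
    have hB : (b.1 : ℝ) = 1 := by rw [h1]; simp
    have hT : (b.2 : ℝ) = 1 - (a.2 : ℝ) := by rw [hsymm]; simp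
    have : g a = Prod.swap (g b) := by
      unfold g
      rw [Prod.ext_iff]
      constructor
      · show es _ = es _
        rw [hA, hB, hT]
        exact es_eq_iff.mpr ⟨0, by push_cast; ring⟩
      · show es _ = es _
        rw [hA, hB, hT]
        exact es_eq_iff.mpr ⟨-1, by push_cast; ring⟩
    show sp2mk (g a) = sp2mk (g b)
    rw [this, sp2mk_swap]
  · have hA : (a.1 : ℝ) = 1 := by rw [h0]; simp
    have hB : (b.1 : ℝ) = 0 := by rw [h1]; simp
    have hT : (b.2 : ℝ) = 1 - (a.2 : ℝ) := by rw [hsymm]; simp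
    have : g a = Prod.swap (g b) := by
      unfold g
      rw [Prod.ext_iff]
      constructor
      · show es _ = es _
        rw [hA, hB, hT]
        exact es_eq_iff.mpr ⟨1, by push_cast; ring⟩
      · show es _ = es _
        rw [hA, hB, hT]
        exact es_eq_iff.mpr ⟨0, by push_cast; ring⟩
    show sp2mk (g a) = sp2mk (g b)
    rw [this, sp2mk_swap])

lemma F_cont : Continuous F :=
  continuous_quot_lift _ (continuous_quot_mk.comp g_cont)

lemma inj_core (p q : I × I) (h : sp2mk (g p) = sp2mk (g q)) :
    (Quot.mk _ p : Moebius) = Quot.mk _ q := by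
  have hs0 : (0:ℝ) ≤ (p.1 : ℝ) := p.1.2.1
  have hs1 : (p.1 : ℝ) ≤ 1 := p.1.2.2
  have ht0 : (0:ℝ) ≤ (p.2 : ℝ) := p.2.2.1
  have ht1 : (p.2 : ℝ) ≤ 1 := p.2.2.2
  have hs0' : (0:ℝ) ≤ (q.1 : ℝ) := q.1.2.1
  have hs1' : (q.1 : ℝ) ≤ 1 := q.1.2.2
  have ht0' : (0:ℝ) ≤ (q.2 : ℝ) := q.2.2.1
  have ht1' : (q.2 : ℝ) ≤ 1 := q.2.2.2
  obtain hcase | hcase := sp2mk_eq_iff.mp h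
  · -- g p = g q
    obtain ⟨h1, h2⟩ := Prod.ext_iff.mp hcase
    obtain ⟨m, hm⟩ := es_eq_iff.mp h1
    obtain ⟨n, hn⟩ := es_eq_iff.mp h2
    have hsum : (p.1 : ℝ) - (q.1 : ℝ) = ((m + n : ℤ) : ℝ) := by push_cast; linarith
    have hdiff : (p.2 : ℝ) - (q.2 : ℝ) = ((m - n : ℤ) : ℝ) := by push_cast; linarith
    have hk1 : m + n = -1 ∨ m + n = 0 ∨ m + n = 1 := by
      have b1 : (-1:ℝ) ≤ ((m + n : ℤ) : ℝ) := by rw [← hsum]; linarith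
      have b2 : ((m + n : ℤ) : ℝ) ≤ 1 := by rw [← hsum]; linarith
      have b1' : (-1:ℤ) ≤ m + n := by exact_mod_cast b1
      have b2' : m + n ≤ 1 := by exact_mod_cast b2
      omega
    have hk2 : m - n = -1 ∨ m - n = 0 ∨ m - n = 1 := by
      have b1 : (-1:ℝ) ≤ ((m - n : ℤ) : ℝ) := by rw [← hdiff]; linarith
      have b2 : ((m - n : ℤ) : ℝ) ≤ 1 := by rw [← hdiff]; linarith
      have b1' : (-1:ℤ) ≤ m - n := by exact_mod_cast b1
      have b2' : m - n ≤ 1 := by exact_mod_cast b2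
      omega
    rcases hk1 with hA | hA | hA <;> rcases hk2 with hB | hB | hB
    -- (-1,-1): p.1 = 0, q.1 = 1, p.2 = 0, q.2 = 1
    · rw [hA] at hsum; rw [hB] at hdiff; push_cast at hsum hdiff
      apply Quot.sound
      refine Or.inr (Or.inl ⟨?_, ?_, ?_⟩)
      · exact I_eq_zero (by linarith)
      · exact I_eq_one (by linarith)
      · exact I_symm_eq (by linarith)
    · omega
    -- (-1,1): p.1 = 0, q.1 = 1, p.2 = 1, q.2 = 0
    · rw [hA] at hsum; rw [hB] at hdiff; push_cast at hsum hdiff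
      apply Quot.sound
      refine Or.inr (Or.inl ⟨?_, ?_, ?_⟩)
      · exact I_eq_zero (by linarith)
      · exact I_eq_one (by linarith)
      · exact I_symm_eq (by linarith)
    · omega
    -- (0,0): p = q
    · rw [hA] at hsum; rw [hB] at hdiff; push_cast at hsum hdiff
      congr 1
      exact Prod.ext (Subtype.ext (by linarith)) (Subtype.ext (by linarith))
    · omega
    -- (1,-1): p.1 = 1, q.1 = 0, p.2 = 0, q.2 = 1
    · rw [hA] at hsum; rw [hB] at hdiff; push_cast at hsum hdiff
      apply Quot.sound
      refine Or.inr (Or.inr ⟨?_, ?_, ?_⟩)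
      · exact I_eq_one (by linarith)
      · exact I_eq_zero (by linarith)
      · exact I_symm_eq (by linarith)
    · omega
    -- (1,1): p.1 = 1, q.1 = 0, p.2 = 1, q.2 = 0
    · rw [hA] at hsum; rw [hB] at hdiff; push_cast at hsum hdiff
      apply Quot.sound
      refine Or.inr (Or.inr ⟨?_, ?_, ?_⟩)
      · exact I_eq_one (by linarith)
      · exact I_eq_zero (by linarith)
      · exact I_symm_eq (by linarith)
  · -- g p = Prod.swap (g q)
    obtain ⟨h1, h2⟩ := Prod.ext_iff.mp hcase
    obtain ⟨m, hm⟩ := es_eq_iff.mp h1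
    obtain ⟨n, hn⟩ := es_eq_iff.mp h2
    have hsum : (p.1 : ℝ) - (q.1 : ℝ) = ((m + n : ℤ) : ℝ) := by push_cast; linarith
    have hdiff : (p.2 : ℝ) + (q.2 : ℝ) = ((m - n : ℤ) : ℝ) := by push_cast; linarith
    have hk1 : m + n = -1 ∨ m + n = 0 ∨ m + n = 1 := by
      have b1 : (-1:ℝ) ≤ ((m + n : ℤ) : ℝ) := by rw [← hsum]; linarith
      have b2 : ((m + n : ℤ) : ℝ) ≤ 1 := by rw [← hsum]; linarith
      have b1' : (-1:ℤ) ≤ m + n := by exact_mod_cast b1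
      have b2' : m + n ≤ 1 := by exact_mod_cast b2
      omega
    have hk2 : m - n = 0 ∨ m - n = 1 ∨ m - n = 2 := by
      have b1 : (0:ℝ) ≤ ((m - n : ℤ) : ℝ) := by rw [← hdiff]; linarith
      have b2 : ((m - n : ℤ) : ℝ) ≤ 2 := by rw [← hdiff]; linarith
      have b1' : (0:ℤ) ≤ m - n := by exact_mod_cast b1
      have b2' : m - n ≤ 2 := by exact_mod_cast b2
      omega
    rcases hk1 with hA | hA | hA <;> rcases hk2 with hB | hB | hB
    · omega
    -- (-1,1): p.1 = 0, q.1 = 1, q.2 = symm p.2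
    · rw [hA] at hsum; rw [hB] at hdiff; push_cast at hsum hdiff
      apply Quot.sound
      refine Or.inr (Or.inl ⟨?_, ?_, ?_⟩)
      · exact I_eq_zero (by linarith)
      · exact I_eq_one (by linarith)
      · exact I_symm_eq (by linarith)
    · omega
    -- (0,0): p.2 = q.2 = 0, p = q
    · rw [hA] at hsum; rw [hB] at hdiff; push_cast at hsum hdiff
      congr 1
      exact Prod.ext (Subtype.ext (by linarith)) (Subtype.ext (by linarith))
    · omega
    -- (0,2): p.2 = q.2 = 1, p = q
    · rw [hA] at hsum; rw [hB] at hdiff; push_cast at hsum hdiff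
      congr 1
      exact Prod.ext (Subtype.ext (by linarith)) (Subtype.ext (by linarith))
    · omega
    -- (1,1): p.1 = 1, q.1 = 0, q.2 = symm p.2
    · rw [hA] at hsum; rw [hB] at hdiff; push_cast at hsum hdiff
      apply Quot.sound
      refine Or.inr (Or.inr ⟨?_, ?_, ?_⟩)
      · exact I_eq_one (by linarith)
      · exact I_eq_zero (by linarith)
      · exact I_symm_eq (by linarith)
    · omega

lemma F_inj : Function.Injective F := by
  intro x y
  induction x using Quot.ind with | _ p =>
  induction y using Quot.ind with | _ q =>
  exact inj_core p q

lemma surj_core (z w : S) (hle : Complex.arg (w:ℂ) ≤ Complex.arg (z:ℂ)) :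
    ∃ p : I × I, sp2mk (g p) = sp2mk ((z, w) : ↥S × ↥S) := by
  have hpi := Real.pi_pos
  set a := Complex.arg (z:ℂ) / Real.pi with ha_def
  set b := Complex.arg (w:ℂ) / Real.pi with hb_def
  obtain ⟨ha1, ha2⟩ := arg_div_pi_mem z
  obtain ⟨hb1, hb2⟩ := arg_div_pi_mem w
  have hab : b ≤ a := by
    rw [ha_def, hb_def]
    exact div_le_div_of_nonneg_right hle hpi.le
  by_cases hpos : 0 ≤ a + b
  · refine ⟨(⟨(a+b)/2, by constructor <;> linarith⟩, ⟨(a-b)/2, by constructor <;> linarith⟩), ?_⟩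
    have : g (⟨(a+b)/2, by constructor <;> linarith⟩, ⟨(a-b)/2, by constructor <;> linarith⟩)
        = ((z, w) : ↥S × ↥S) := by
      unfold g
      rw [Prod.ext_iff]
      constructor
      · show es ((a+b)/2 + (a-b)/2) = z
        rw [show (a+b)/2 + (a-b)/2 = a by ring]
        exact es_arg z
      · show es ((a+b)/2 - (a-b)/2) = w
        rw [show (a+b)/2 - (a-b)/2 = b by ring]
        exact es_arg w
    rw [this]
  · push_neg at hpos
    refine ⟨(⟨(a+b)/2 + 1, by constructor <;> linarith⟩, ⟨1 - (a-b)/2, by constructor <;> linarith⟩), ?_⟩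
    have : g (⟨(a+b)/2 + 1, by constructor <;> linarith⟩, ⟨1 - (a-b)/2, by constructor <;> linarith⟩)
        = ((w, z) : ↥S × ↥S) := by
      unfold g
      rw [Prod.ext_iff]
      constructor
      · show es ((a+b)/2 + 1 + (1 - (a-b)/2)) = w
        rw [show (a+b)/2 + 1 + (1 - (a-b)/2) = b + 2 by ring]
        rw [show es (b + 2) = es b from Subtype.ext (ee_add_two b)]
        exact es_arg w
      · show es ((a+b)/2 + 1 - (1 - (a-b)/2)) = z
        rw [show (a+b)/2 + 1 - (1 - (a-b)/2) = a by ring]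
        exact es_arg z
    rw [this]
    exact sp2mk_swap ((z, w) : ↥S × ↥S)

lemma F_surj : Function.Surjective F := by
  intro y
  induction y using Quot.ind with | _ zw =>
  obtain ⟨z, w⟩ := zw
  rcases le_total (Complex.arg (w:ℂ)) (Complex.arg (z:ℂ)) with hle | hle
  · obtain ⟨p, hp⟩ := surj_core z w hle
    exact ⟨Quot.mk _ p, hp⟩
  · obtain ⟨p, hp⟩ := surj_core w z hle
    refine ⟨Quot.mk _ p, ?_⟩
    show sp2mk (g p) = sp2mk ((z, w) : ↥S × ↥S)
    rw [hp]
    exact sp2mk_swap ((z, w) : ↥S × ↥S)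

/-- The symmetric-function embedding used to prove Hausdorffness. -/
def Gmap : SP2 ↥S → ℂ × ℂ := Quot.lift
    (fun p : ↥S × ↥S => ((p.1 : ℂ) + (p.2 : ℂ), (p.1 : ℂ) * (p.2 : ℂ))) (by
  rintro a b (rfl | rfl)
  · rfl
  · exact Prod.ext (add_comm _ _) (mul_comm _ _))

lemma Gmap_cont : Continuous Gmap :=
  continuous_quot_lift _ (by fun_prop)

lemma Gmap_inj : Function.Injective Gmap := by
  intro x y
  induction x using Quot.ind with | _ a =>
  induction y using Quot.ind with | _ b =>
  intro h
  obtain ⟨h1, h2⟩ := Prod.ext_iff.mp h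
  have h1' : (a.1:ℂ) + (a.2:ℂ) = (b.1:ℂ) + (b.2:ℂ) := h1
  have h2' : (a.1:ℂ) * (a.2:ℂ) = (b.1:ℂ) * (b.2:ℂ) := h2
  clear h1 h2 h
  apply Quot.sound
  have key : ((a.1:ℂ) - (b.1:ℂ)) * ((a.1:ℂ) - (b.2:ℂ)) = 0 := by
    have : ((a.1:ℂ) - (b.1:ℂ)) * ((a.1:ℂ) - (b.2:ℂ))
        = (a.1:ℂ) * (a.1:ℂ) - ((b.1:ℂ) + (b.2:ℂ)) * (a.1:ℂ) + (b.1:ℂ) * (b.2:ℂ) := by ring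
    rw [this, ← h1', ← h2']
    ring
  rcases mul_eq_zero.mp key with h3 | h3
  · left
    have e1 : (a.1:ℂ) = (b.1:ℂ) := sub_eq_zero.mp h3
    have e2 : (a.2:ℂ) = (b.2:ℂ) := by linear_combination h1' - e1
    exact Prod.ext (Subtype.ext e1) (Subtype.ext e2)
  · right
    have e1 : (a.1:ℂ) = (b.2:ℂ) := sub_eq_zero.mp h3
    have e2 : (a.2:ℂ) = (b.1:ℂ) := by linear_combination h1' - e1
    exact Prod.ext (Subtype.ext e1) (Subtype.ext e2)

instance : T2Space (SP2 ↥S) := T2Space.of_injective_continuous Gmap_inj Gmap_cont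

instance : CompactSpace Moebius := by
  constructor
  have : (Set.univ : Set Moebius) = Quot.mk _ '' (Set.univ : Set (I × I)) := by
    rw [Set.image_univ]
    exact (Set.range_eq_univ.mpr (Quot.mk_surjective)).symm
  rw [this]
  exact isCompact_univ.image continuous_quot_mk

lemma F_image_boundary : F '' moebiusBoundary = sp2diag ↥S := by
  apply Set.Subset.antisymm
  · rintro _ ⟨x, ⟨pp, hp2, rfl⟩, rfl⟩
    rcases hp2 with h0 | h1
    · refine ⟨es (pp.1 : ℝ), ?_⟩
      show sp2mk _ = sp2mk (g pp)
      have hT : (pp.2 : ℝ) = 0 := by rw [h0]; simp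
      have : g pp = (es (pp.1 : ℝ), es (pp.1 : ℝ)) := by
        unfold g
        rw [hT, add_zero, sub_zero]
      rw [this]
    · refine ⟨es ((pp.1 : ℝ) + 1), ?_⟩
      show sp2mk _ = sp2mk (g pp)
      have hT : (pp.2 : ℝ) = 1 := by rw [h1]; simp
      have : g pp = (es ((pp.1 : ℝ) + 1), es ((pp.1 : ℝ) + 1)) := by
        unfold g
        rw [hT, Prod.ext_iff]
        refine ⟨rfl, ?_⟩
        show es _ = es _
        exact es_eq_iff.mpr ⟨-1, by push_cast; ring⟩
      rw [this]
  · rintro _ ⟨z, rfl⟩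
    set a := Complex.arg (z:ℂ) / Real.pi with ha_def
    obtain ⟨ha1, ha2⟩ := arg_div_pi_mem z
    by_cases h0 : 0 ≤ a
    · refine ⟨Quot.mk _ (⟨a, h0, ha2⟩, 0), ⟨(⟨a, h0, ha2⟩, 0), Or.inl rfl, rfl⟩, ?_⟩
      show sp2mk (g _) = sp2mk ((z, z) : ↥S × ↥S)
      have : g ((⟨a, h0, ha2⟩, 0) : I × I) = ((z, z) : ↥S × ↥S) := by
        unfold g
        rw [Prod.ext_iff]
        constructor
        · show es (a + ((0:I):ℝ)) = z
          rw [show ((0:I):ℝ) = 0 from rfl, add_zero]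
          exact es_arg z
        · show es (a - ((0:I):ℝ)) = z
          rw [show ((0:I):ℝ) = 0 from rfl, sub_zero]
          exact es_arg z
      rw [this]
    · push_neg at h0
      refine ⟨Quot.mk _ (⟨a + 1, by constructor <;> linarith⟩, 1),
        ⟨(⟨a + 1, by constructor <;> linarith⟩, 1), Or.inr rfl, rfl⟩, ?_⟩
      show sp2mk (g _) = sp2mk ((z, z) : ↥S × ↥S)
      have : g ((⟨a + 1, by constructor <;> linarith⟩, 1) : I × I) = ((z, z) : ↥S × ↥S) := by
        unfold g
        rw [Prod.ext_iff]
        constructor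
        · show es (a + 1 + ((1:I):ℝ)) = z
          rw [show ((1:I):ℝ) = 1 from rfl, show a + 1 + 1 = a + 2 by ring,
            show es (a + 2) = es a from Subtype.ext (ee_add_two a)]
          exact es_arg z
        · show es (a + 1 - ((1:I):ℝ)) = z
          rw [show ((1:I):ℝ) = 1 from rfl, add_sub_cancel_right]
          exact es_arg z
      rw [this]

end MortonAux


/-- **Morton.** The symmetric square of the circle is homeomorphic to the
compact Möbius band, by a homeomorphism carrying the image of the diagonal onto the
boundary circle. -/
theorem sp2_circle_homeomorph_moebius :
    ∃ φ : SP2 (Metric.sphere (0 : ℂ) 1) ≃ₜ Moebius,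
      φ '' sp2diag (Metric.sphere (0 : ℂ) 1) = moebiusBoundary := by
  classical
  let E : Moebius ≃ SP2 ↥MortonAux.S :=
    Equiv.ofBijective MortonAux.F ⟨MortonAux.F_inj, MortonAux.F_surj⟩
  have hc : Continuous (E : Moebius → SP2 ↥MortonAux.S) := MortonAux.F_cont
  let H : Moebius ≃ₜ SP2 ↥MortonAux.S := hc.homeoOfEquivCompactToT2
  refine ⟨H.symm, ?_⟩
  have hHF : (H : Moebius → SP2 ↥MortonAux.S) = MortonAux.F := rfl
  have himg : (H : Moebius → SP2 ↥MortonAux.S) '' moebiusBoundary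
      = sp2diag ↥MortonAux.S := by
    rw [hHF]; exact MortonAux.F_image_boundary
  calc (H.symm : SP2 ↥MortonAux.S → Moebius) '' sp2diag ↥MortonAux.S
      = H.symm '' (H '' moebiusBoundary) := by rw [himg]
    _ = moebiusBoundary := by
        rw [Set.image_image]
        simp
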